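/- If {ξ_k}_{k=1}^N are i.i.d. standard normal random variables and λ_1,…,λ_N are real numbers, then there is a numerical constant c > 0 such that for all t > 0, P(|∑_k λ_k(ξ_k² - 1)| ≥ t) ≤ 2 max( exp(-c t² / ∑_k λ_k²), exp(-c t / max_k |λ_k|) ). -/

import Mathlib

open MeasureTheory ProbabilityTheory

section Aux
open Real
open scoped ENNReal NNReal

lemma gauss_exp_sq (u : ℝ) (hu : u < 1/2) :
    Integrable (fun x => Real.exp (u * x ^ 2)) (gaussianReal 0 1) ∧
    ∫ x, Real.exp (u * x ^ 2) ∂(gaussianReal 0 1) = Real.sqrt (1 / (1 - 2 * u)) := by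
  have h2 : (0:ℝ) < 1/2 - u := by linarith
  have hpdf : ∀ x : ℝ, gaussianPDFReal 0 1 x * Real.exp (u * x ^ 2)
      = (Real.sqrt (2 * π))⁻¹ * Real.exp (-(1/2 - u) * x ^ 2) := by
    intro x
    simp only [gaussianPDFReal, NNReal.coe_one, mul_one, sub_zero]
    rw [mul_assoc, ← Real.exp_add]
    ring_nf
  have hInt : Integrable (fun x => (Real.sqrt (2 * π))⁻¹ * Real.exp (-(1/2 - u) * x ^ 2)) :=
    (integrable_exp_neg_mul_sq h2).const_mul _
  have hd : gaussianReal 0 1 = volume.withDensity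
      (fun x => ((gaussianPDFReal 0 1 x).toNNReal : ℝ≥0∞)) := by
    rw [gaussianReal_of_var_ne_zero _ one_ne_zero]
    rfl
  have hmeas : Measurable fun x => (gaussianPDFReal 0 1 x).toNNReal :=
    (measurable_gaussianPDFReal 0 1).real_toNNReal
  constructor
  · rw [hd, integrable_withDensity_iff_integrable_smul hmeas]
    refine hInt.congr (ae_of_all _ fun x => ?_)
    simp only [NNReal.smul_def, smul_eq_mul, Real.coe_toNNReal _ (gaussianPDFReal_nonneg 0 1 x)]
    exact (hpdf x).symm
  · rw [hd, integral_withDensity_eq_integral_smul hmeas]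
    have : ∀ x : ℝ, (gaussianPDFReal 0 1 x).toNNReal • Real.exp (u * x ^ 2)
        = (Real.sqrt (2 * π))⁻¹ * Real.exp (-(1/2 - u) * x ^ 2) := by
      intro x
      simp only [NNReal.smul_def, smul_eq_mul, Real.coe_toNNReal _ (gaussianPDFReal_nonneg 0 1 x)]
      exact hpdf x
    simp_rw [this]
    rw [integral_const_mul, integral_gaussian]
    rw [← Real.sqrt_inv, ← Real.sqrt_mul (by positivity)]
    congr 1
    have hpi : π ≠ 0 := pi_ne_zero
    have h3 : (1:ℝ)/2 - u ≠ 0 := ne_of_gt h2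
    have h4 : (1:ℝ) - 2*u ≠ 0 := by intro h; apply h3; linarith
    field_simp

lemma sqrt_exp_eq (y : ℝ) : Real.sqrt (Real.exp (2 * y)) = Real.exp y := by
  rw [show (2:ℝ) * y = y + y by ring, Real.exp_add, ← sq, Real.sqrt_sq (Real.exp_pos y).le]

lemma key_ineq (u : ℝ) (hu : |u| ≤ 1/4) :
    Real.exp (-u) * Real.sqrt (1 / (1 - 2 * u)) ≤ Real.exp (4 * u ^ 2) := by
  obtain ⟨hl, hr⟩ := abs_le.1 hu
  have h0 : (0:ℝ) < 1 - 2 * u := by linarith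
  have h12 : (1:ℝ)/2 ≤ 1 - 2 * u := by linarith
  have hlog : Real.log (1 / (1 - 2 * u)) ≤ 2 * u / (1 - 2 * u) := by
    have h := Real.log_le_sub_one_of_pos (show (0:ℝ) < 1 / (1 - 2*u) by positivity)
    have : 1 / (1 - 2 * u) - 1 = 2 * u / (1 - 2 * u) := by field_simp; ring
    linarith
  have hfrac : 4 * u ^ 2 / (1 - 2 * u) ≤ 8 * u ^ 2 := by
    have h1 : 4 * u ^ 2 / (1 - 2 * u) ≤ 4 * u ^ 2 / (1/2) :=
      div_le_div_of_nonneg_left (by positivity) (by norm_num) h12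
    have : 4 * u ^ 2 / ((1:ℝ)/2) = 8 * u ^ 2 := by ring
    linarith
  have hkey : Real.exp (-2 * u) * (1 / (1 - 2 * u)) ≤ Real.exp (8 * u ^ 2) := by
    have he : (1:ℝ) / (1 - 2 * u) = Real.exp (Real.log (1 / (1 - 2 * u))) :=
      (Real.exp_log (by positivity)).symm
    rw [he, ← Real.exp_add]
    apply Real.exp_le_exp.2
    have : -2 * u + 2 * u / (1 - 2 * u) = 4 * u ^ 2 / (1 - 2 * u) := by field_simp; ring
    linarith
  calc Real.exp (-u) * Real.sqrt (1 / (1 - 2 * u))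
      = Real.sqrt (Real.exp (-2 * u) * (1 / (1 - 2 * u))) := by
        rw [Real.sqrt_mul (Real.exp_pos _).le, show (-2:ℝ) * u = 2 * (-u) by ring, sqrt_exp_eq]
    _ ≤ Real.sqrt (Real.exp (8 * u ^ 2)) := Real.sqrt_le_sqrt hkey
    _ = Real.exp (4 * u ^ 2) := by
        rw [show (8:ℝ) * u ^ 2 = 2 * (4 * u ^ 2) by ring, sqrt_exp_eq]


lemma single_bound {Ω : Type} [MeasurableSpace Ω] (μ : Measure Ω) [IsProbabilityMeasure μ]
    (g : Ω → ℝ) (hg : Measurable g) (hmap : Measure.map g μ = gaussianReal 0 1)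
    (a s : ℝ) (h : |s * a| ≤ 1/4) :
    Integrable (fun ω => Real.exp (s * (a * (g ω ^ 2 - 1)))) μ ∧
      mgf (fun ω => a * (g ω ^ 2 - 1)) μ s ≤ Real.exp (4 * (s * a) ^ 2) := by
  set u := s * a with hud
  have hu : u < 1/2 := lt_of_le_of_lt (le_trans (le_abs_self _) h) (by norm_num)
  obtain ⟨hint, hval⟩ := gauss_exp_sq u hu
  have hrw : ∀ x : ℝ, Real.exp (s * (a * (x ^ 2 - 1))) = Real.exp (-u) * Real.exp (u * x ^ 2) := by
    intro x
    rw [← Real.exp_add]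
    congr 1
    simp only [hud]
    ring
  have hcomp : Integrable (fun ω => Real.exp (u * g ω ^ 2)) μ := by
    have := (integrable_map_measure (hmap ▸ hint.aestronglyMeasurable)
      hg.aemeasurable).1 (hmap ▸ hint)
    exact this
  constructor
  · refine (hcomp.const_mul (Real.exp (-u))).congr (ae_of_all _ fun ω => ?_)
    exact (hrw (g ω)).symm
  · have hmgf : mgf (fun ω => a * (g ω ^ 2 - 1)) μ s
        = Real.exp (-u) * ∫ x, Real.exp (u * x ^ 2) ∂(gaussianReal 0 1) := by
      rw [mgf, ← hmap, integral_map hg.aemeasurable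
        (by rw [hmap]; exact hint.aestronglyMeasurable)]
      rw [← integral_const_mul]
      exact integral_congr_ae (ae_of_all _ fun ω => hrw (g ω))
    rw [hmgf, hval]
    exact key_ineq u h

lemma iIndepFun_of_ae_eq {Ω : Type} [MeasurableSpace Ω] {μ : Measure Ω} {ι : Type} [Countable ι]
    {β : ι → Type} {m : ∀ i, MeasurableSpace (β i)} {f g : ∀ i, Ω → β i}
    (hf : iIndepFun f μ) (h : ∀ i, f i =ᵐ[μ] g i) : iIndepFun g μ := by
  rw [iIndepFun_iff_measure_inter_preimage_eq_mul] at hf ⊢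
  have hae : ∀ᵐ ω ∂μ, ∀ i, f i ω = g i ω := ae_all_iff.2 h
  intro S sets hsets
  have h1 : ∀ i, μ (g i ⁻¹' sets i) = μ (f i ⁻¹' sets i) := fun i =>
    measure_congr ((h i).mono fun ω hω => by
      show (g i ω ∈ sets i) = (f i ω ∈ sets i)
      rw [hω])
  have h2 : μ (⋂ i ∈ S, g i ⁻¹' sets i) = μ (⋂ i ∈ S, f i ⁻¹' sets i) := by
    refine measure_congr (hae.mono fun ω hω => ?_)
    show (ω ∈ ⋂ i ∈ S, g i ⁻¹' sets i) = (ω ∈ ⋂ i ∈ S, f i ⁻¹' sets i)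
    simp only [Set.mem_iInter, Set.mem_preimage, eq_iff_iff, hω]
  rw [h2, hf S hsets]
  exact Finset.prod_congr rfl fun i _ => (h1 i).symm
end Aux

theorem weighted_chi_sq_tail_bound :
    ∃ c : ℝ, 0 < c ∧
      ∀ {Ω : Type} [MeasurableSpace Ω] (μ : Measure Ω) [IsProbabilityMeasure μ]
        (N : ℕ) (hN : 0 < N) (ξ : Fin N → Ω → ℝ) (lam : Fin N → ℝ),
        iIndepFun ξ μ →
        (∀ k, Measure.map (ξ k) μ = gaussianReal 0 1) →
        0 < ∑ k, (lam k) ^ 2 →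
        ∀ t : ℝ, 0 < t →
          (μ {ω | t ≤ |∑ k, lam k * ((ξ k ω) ^ 2 - 1)|}).toReal ≤
            2 * max (Real.exp (-(c * t ^ 2) / ∑ k, (lam k) ^ 2))
              (Real.exp (-(c * t) /
                (Finset.univ.sup' (Finset.univ_nonempty_iff.mpr (Fin.pos_iff_nonempty.mp hN))
                  fun k => |lam k|))) := by
  refine ⟨1/16, by norm_num, ?_⟩
  intro Ω _ μ _ N hN ξ lam hindep hmap hsum t ht
  have haem : ∀ k, AEMeasurable (ξ k) μ := by
    intro k
    by_contra hc
    have h0 := Measure.map_of_not_aemeasurable hc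
    rw [hmap k] at h0
    exact (IsProbabilityMeasure.ne_zero (gaussianReal 0 1)) h0
  set ξ' : Fin N → Ω → ℝ := fun k => (haem k).mk (ξ k) with hξ'
  have hmeas' : ∀ k, Measurable (ξ' k) := fun k => (haem k).measurable_mk
  have heq : ∀ k, ξ k =ᵐ[μ] ξ' k := fun k => (haem k).ae_eq_mk
  have hmap' : ∀ k, Measure.map (ξ' k) μ = gaussianReal 0 1 := fun k => by
    rw [← Measure.map_congr (heq k), hmap k]
  have hindep' : iIndepFun ξ' μ := iIndepFun_of_ae_eq hindep heq
  set X : Fin N → Ω → ℝ := fun k ω => lam k * (ξ' k ω ^ 2 - 1) with hX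
  have hXmeas : ∀ k, Measurable (X k) := fun k =>
    (((hmeas' k).pow_const 2).sub_const 1).const_mul (lam k)
  have hindepX : iIndepFun X μ := by
    exact hindep'.comp (fun k (x : ℝ) => lam k * (x ^ 2 - 1))
      (fun k => ((measurable_id.pow_const 2).sub_const 1).const_mul (lam k))
  set σ2 := ∑ k, lam k ^ 2 with hσ2
  set M := Finset.univ.sup' (Finset.univ_nonempty_iff.mpr (Fin.pos_iff_nonempty.mp hN))
    fun k => |lam k| with hMdef
  have hMk : ∀ k, |lam k| ≤ M := fun k => by
    rw [hMdef]; exact Finset.le_sup' (fun k => |lam k|) (Finset.mem_univ k)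
  have hM : 0 < M := by
    by_contra hc
    push_neg at hc
    have hz : ∀ k, lam k = 0 := fun k =>
      abs_eq_zero.1 (le_antisymm (le_trans (hMk k) hc) (abs_nonneg _))
    rw [hσ2] at hsum
    simp [hz] at hsum
  have hσ2pos : 0 < σ2 := hsum
  set s₀ := min (t / (8 * σ2)) (1 / (4 * M)) with hs₀def
  have hs₀pos : 0 < s₀ := lt_min (by positivity) (by positivity)
  have hs₀le : s₀ ≤ 1 / (4 * M) := min_le_right _ _
  have hcond : ∀ s : ℝ, |s| = s₀ → ∀ k, |s * lam k| ≤ 1/4 := by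
    intro s hs k
    rw [abs_mul, hs]
    calc s₀ * |lam k| ≤ (1/(4*M)) * M :=
          mul_le_mul hs₀le (hMk k) (abs_nonneg _) (by positivity)
      _ = 1/4 := by field_simp
  have hmain : ∀ s : ℝ, (∀ k, |s * lam k| ≤ 1/4) →
      Integrable (fun ω => Real.exp (s * (∑ k, X k) ω)) μ ∧
      mgf (∑ k, X k) μ s ≤ Real.exp (4 * s ^ 2 * σ2) := by
    intro s hs
    have hsingle := fun k => single_bound μ (ξ' k) (hmeas' k) (hmap' k) (lam k) s (hs k)
    have hint : Integrable (fun ω => Real.exp (s * (∑ k, X k) ω)) μ :=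
      hindepX.integrable_exp_mul_sum hXmeas (fun k _ => (hsingle k).1)
    refine ⟨hint, ?_⟩
    rw [hindepX.mgf_sum hXmeas Finset.univ]
    calc ∏ k, mgf (X k) μ s ≤ ∏ k, Real.exp (4 * (s * lam k) ^ 2) :=
        Finset.prod_le_prod (fun k _ => mgf_nonneg) (fun k _ => (hsingle k).2)
      _ = Real.exp (∑ k, 4 * (s * lam k) ^ 2) := by rw [Real.exp_sum]
      _ = Real.exp (4 * s ^ 2 * σ2) := by
          congr 1
          rw [hσ2, Finset.mul_sum]
          exact Finset.sum_congr rfl fun k _ => by ring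
  obtain ⟨hintp, hmgfp⟩ := hmain s₀ (hcond s₀ (abs_of_pos hs₀pos))
  obtain ⟨hintm, hmgfm⟩ := hmain (-s₀) (hcond (-s₀) (by rw [abs_neg]; exact abs_of_pos hs₀pos))
  have hup : (μ {ω | t ≤ (∑ k, X k) ω}).toReal ≤ Real.exp (-s₀ * t + 4 * s₀ ^ 2 * σ2) := by
    calc (μ {ω | t ≤ (∑ k, X k) ω}).toReal
        ≤ Real.exp (-s₀ * t) * mgf (∑ k, X k) μ s₀ :=
          measure_ge_le_exp_mul_mgf t hs₀pos.le hintp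
      _ ≤ Real.exp (-s₀ * t) * Real.exp (4 * s₀ ^ 2 * σ2) :=
          mul_le_mul_of_nonneg_left hmgfp (Real.exp_pos _).le
      _ = Real.exp (-s₀ * t + 4 * s₀ ^ 2 * σ2) := by rw [← Real.exp_add]
  have hdown : (μ {ω | (∑ k, X k) ω ≤ -t}).toReal ≤ Real.exp (-s₀ * t + 4 * s₀ ^ 2 * σ2) := by
    have h1 := measure_le_le_exp_mul_mgf (μ := μ) (X := ∑ k, X k) (-t)
      (by linarith : -s₀ ≤ 0) hintm
    refine h1.trans ?_
    have h2 : -(-s₀) * -t = -s₀ * t := by ring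
    rw [h2]
    calc Real.exp (-s₀ * t) * mgf (∑ k, X k) μ (-s₀)
        ≤ Real.exp (-s₀ * t) * Real.exp (4 * (-s₀) ^ 2 * σ2) :=
          mul_le_mul_of_nonneg_left hmgfm (Real.exp_pos _).le
      _ = Real.exp (-s₀ * t + 4 * s₀ ^ 2 * σ2) := by rw [← Real.exp_add]; ring_nf
  have hexp : Real.exp (-s₀ * t + 4 * s₀ ^ 2 * σ2) ≤
      max (Real.exp (-(1/16 * t ^ 2) / σ2)) (Real.exp (-(1/16 * t) / M)) := by
    have h1 : s₀ ≤ t / (8 * σ2) := min_le_left _ _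
    have hmid : -s₀ * t + 4 * s₀ ^ 2 * σ2 ≤ -s₀ * t / 2 := by
      have h3 : 4 * s₀ ^ 2 * σ2 ≤ s₀ * t / 2 := by
        have h4 : s₀ * s₀ ≤ s₀ * (t / (8 * σ2)) :=
          mul_le_mul_of_nonneg_left h1 hs₀pos.le
        calc 4 * s₀ ^ 2 * σ2 = 4 * σ2 * (s₀ * s₀) := by ring
          _ ≤ 4 * σ2 * (s₀ * (t / (8 * σ2))) :=
              mul_le_mul_of_nonneg_left h4 (by positivity)
          _ = s₀ * t / 2 := by field_simp; ring
      linarith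
    rcases min_cases (t / (8 * σ2)) (1 / (4 * M)) with ⟨hmin, _⟩ | ⟨hmin, _⟩
    · refine le_max_of_le_left (Real.exp_le_exp.2 ?_)
      have heqv : -s₀ * t / 2 = -(1/16 * t ^ 2) / σ2 := by
        rw [hs₀def, hmin]; field_simp; ring
      linarith
    · refine le_max_of_le_right (Real.exp_le_exp.2 ?_)
      have heqv : -s₀ * t / 2 = -(t / (8 * M)) := by
        rw [hs₀def, hmin]; field_simp; ring_nf
      have h5 : -(t / (8 * M)) ≤ -(1/16 * t) / M := by
        rw [neg_div]
        apply neg_le_neg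
        rw [div_le_div_iff₀ (by positivity) (by positivity)]
        nlinarith [hM, ht]
      linarith
  have hseteq : μ {ω | t ≤ |∑ k, lam k * (ξ k ω ^ 2 - 1)|} = μ {ω | t ≤ |(∑ k, X k) ω|} := by
    have hae : ∀ᵐ ω ∂μ, ∑ k, lam k * (ξ k ω ^ 2 - 1) = (∑ k, X k) ω := by
      filter_upwards [ae_all_iff.2 heq] with ω hω
      rw [Finset.sum_apply]
      exact Finset.sum_congr rfl fun k _ => by rw [hω k]
    refine measure_congr (hae.mono fun ω hω => ?_)
    show (t ≤ |∑ k, lam k * (ξ k ω ^ 2 - 1)|) = (t ≤ |(∑ k, X k) ω|)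
    rw [hω]
  rw [hseteq]
  have hsub : {ω | t ≤ |(∑ k, X k) ω|} ⊆
      {ω | t ≤ (∑ k, X k) ω} ∪ {ω | (∑ k, X k) ω ≤ -t} := by
    intro ω hω
    simp only [Set.mem_setOf_eq] at hω
    rcases le_abs.1 hω with h | h
    · exact Or.inl h
    · exact Or.inr (by simp only [Set.mem_setOf_eq]; linarith)
  calc (μ {ω | t ≤ |(∑ k, X k) ω|}).toReal
      ≤ ((μ {ω | t ≤ (∑ k, X k) ω}) + μ {ω | (∑ k, X k) ω ≤ -t}).toReal :=
        ENNReal.toReal_mono (by finiteness)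
          ((measure_mono hsub).trans (measure_union_le _ _))
    _ = (μ {ω | t ≤ (∑ k, X k) ω}).toReal + (μ {ω | (∑ k, X k) ω ≤ -t}).toReal :=
        ENNReal.toReal_add (measure_ne_top _ _) (measure_ne_top _ _)
    _ ≤ Real.exp (-s₀ * t + 4 * s₀ ^ 2 * σ2) + Real.exp (-s₀ * t + 4 * s₀ ^ 2 * σ2) :=
        add_le_add hup hdown
    _ = 2 * Real.exp (-s₀ * t + 4 * s₀ ^ 2 * σ2) := by ring
    _ ≤ 2 * max (Real.exp (-(1/16 * t ^ 2) / σ2)) (Real.exp (-(1/16 * t) / M)) :=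
        mul_le_mul_of_nonneg_left hexp (by norm_num)
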